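/- Let r be a positive integer. Then for every e ∈ F_{2^r}, Tr_{F_{2^r}/F_2}( 1/(e + e^{-1}) ) = 0, where Tr_{F_{2^r}/F_2}(x) = ∑_{i=0}^{r-1} x^{2^i} is the absolute trace map and inversion/division follow the convention 0^{-1} = 0 and 1/0 = 0. -/

import Mathlib

/-- For every `e` in the finite field `F_{2^r}`, the absolute trace of `1/(e + e⁻¹)`
vanishes (with the convention `0⁻¹ = 0` and `1/0 = 0`, as in Lean fields). -/
theorem trace_of_inverse_sum_zero (r : ℕ) (hr : 1 ≤ r)
    (K : Type*) [Field K] [Fintype K] (hcard : Fintype.card K = 2 ^ r) :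
    ∀ e : K, ∑ i ∈ Finset.range r, (1 / (e + e⁻¹)) ^ 2 ^ i = 0 := by
  have h2 : (2 : K) = 0 := by
    have hc := FiniteField.cast_card_eq_zero K
    rw [hcard] at hc
    push_cast at hc
    exact pow_eq_zero_iff (by omega) |>.mp hc
  haveI hC : CharP K 2 := by
    have hd : ringChar K ∣ 2 := ringChar.dvd (by exact_mod_cast h2)
    have h1 : ringChar K ≠ 1 := CharP.ringChar_ne_one
    have : ringChar K = 2 := by
      rcases (Nat.dvd_prime Nat.prime_two).mp hd with h | h
      · exact absurd h h1
      · exact h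
    exact this ▸ ringChar.charP K
  intro e
  -- key: 1/(e+e⁻¹) = x + x^2 for some x
  obtain ⟨x, hx⟩ : ∃ x : K, 1 / (e + e⁻¹) = x + x ^ 2 := by
    rcases eq_or_ne e 0 with rfl | he0
    · exact ⟨0, by simp⟩
    rcases eq_or_ne e 1 with rfl | he1
    · refine ⟨0, by simp [h2, one_add_one_eq_two]⟩
    · refine ⟨1 / (e + 1), ?_⟩
      have hne : e + 1 ≠ 0 := by
        intro h
        apply he1
        have : e = -1 := by linear_combination h
        simpa [CharTwo.neg_eq] using this
      have hs : e + e⁻¹ = (e + 1) ^ 2 / e := by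
        field_simp
        ring_nf
        linear_combination (-e : K) * h2
      rw [hs]
      field_simp
      ring_nf
      linear_combination (-1 : K) * h2
  rw [hx]
  have key : ∀ i, (x + x ^ 2) ^ 2 ^ i = x ^ 2 ^ (i + 1) - x ^ 2 ^ i := by
    intro i
    rw [CharTwo.sub_eq_add, add_pow_char_pow, add_comm]
    ring
  simp_rw [key]
  rw [Finset.sum_range_sub (fun i => x ^ 2 ^ i)]
  have : x ^ 2 ^ r = x := by rw [← hcard, FiniteField.pow_card]
  simp [this]
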